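/- Let a < b be real numbers and let f : (a,b) → ℝ be given by a power series f(x) = Σ_{k=0}^{∞} c_k (x-a)^k with real coefficients c_k ≥ 0 for all k, where the series Σ_{k=0}^{∞} c_k (b-a)^k converges to a finite value L (so that f(b-) = L). Then for every n ∈ ℕ and every x ∈ (a,b): T_n(x) ≤ T_{n+1}(x) ≤ f(x) ≤ 𝕋_{n+1}(x) ≤ 𝕋_n(x), where T_n(x) = Σ_{k=0}^{n} c_k (x-a)^k and 𝕋_m(x) = T_{m-1}(x) + (L - T_{m-1}(b))·((x-a)/(b-a))^m for m ≥ 1, with 𝕋_0(x) = L. -/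

import Mathlib

open Real Set

theorem double_sided_taylor_nonneg_coeffs
    (a b : ℝ) (hab : a < b) (c : ℕ → ℝ) (hc : ∀ k, 0 ≤ c k)
    (f : ℝ → ℝ) (L : ℝ)
    (hL : HasSum (fun k : ℕ => c k * (b - a) ^ k) L)
    (hf : ∀ x ∈ Ioo a b, HasSum (fun k : ℕ => c k * (x - a) ^ k) (f x)) :
    ∀ n : ℕ, ∀ x ∈ Ioo a b,
      (∑ k ∈ Finset.range (n + 1), c k * (x - a) ^ k) ≤
        (∑ k ∈ Finset.range (n + 2), c k * (x - a) ^ k) ∧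
      (∑ k ∈ Finset.range (n + 2), c k * (x - a) ^ k) ≤ f x ∧
      f x ≤ (∑ k ∈ Finset.range (n + 1), c k * (x - a) ^ k) +
        (L - ∑ k ∈ Finset.range (n + 1), c k * (b - a) ^ k) * ((x - a) / (b - a)) ^ (n + 1) ∧
      (∑ k ∈ Finset.range (n + 1), c k * (x - a) ^ k) +
        (L - ∑ k ∈ Finset.range (n + 1), c k * (b - a) ^ k) * ((x - a) / (b - a)) ^ (n + 1) ≤
      (∑ k ∈ Finset.range n, c k * (x - a) ^ k) +
        (L - ∑ k ∈ Finset.range n, c k * (b - a) ^ k) * ((x - a) / (b - a)) ^ n := by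
  intro n x hx
  obtain ⟨hax, hxb⟩ := hx
  have htpos : 0 < x - a := by linarith
  have hBpos : 0 < b - a := by linarith
  have htB : x - a < b - a := by linarith
  set t := x - a with ht
  set B := b - a with hB
  set q := t / B with hq
  have hq0 : 0 < q := div_pos htpos hBpos
  have hq1 : q < 1 := (div_lt_one hBpos).mpr htB
  have htq : t = B * q := by rw [hq]; field_simp [hBpos.ne']
  clear_value t B q
  have hfx : HasSum (fun k : ℕ => c k * t ^ k) (f x) := by rw [ht]; exact hf x ⟨hax, hxb⟩
  have tailf : ∀ m, HasSum (fun k => c (k + m) * t ^ (k + m))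
      (f x - ∑ k ∈ Finset.range m, c k * t ^ k) :=
    fun m => (hasSum_nat_add_iff' m).mpr hfx
  have tailL : ∀ m, HasSum (fun k => c (k + m) * B ^ (k + m))
      (L - ∑ k ∈ Finset.range m, c k * B ^ k) :=
    fun m => (hasSum_nat_add_iff' m).mpr hL
  have tailL_nonneg : ∀ m, 0 ≤ L - ∑ k ∈ Finset.range m, c k * B ^ k :=
    fun m => (tailL m).nonneg (fun k => mul_nonneg (hc _) (pow_nonneg hBpos.le _))
  have key : ∀ m, f x ≤ (∑ k ∈ Finset.range m, c k * t ^ k) +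
      (L - ∑ k ∈ Finset.range m, c k * B ^ k) * q ^ m := by
    intro m
    have h2 : HasSum (fun k => q ^ m * (c (k + m) * B ^ (k + m)))
        (q ^ m * (L - ∑ k ∈ Finset.range m, c k * B ^ k)) := (tailL m).mul_left _
    have h1 : f x - ∑ k ∈ Finset.range m, c k * t ^ k ≤
        q ^ m * (L - ∑ k ∈ Finset.range m, c k * B ^ k) := by
      refine hasSum_le ?_ (tailf m) h2
      intro k
      have hqk : q ^ (k + m) ≤ q ^ m := by
        rw [pow_add]
        calc q ^ k * q ^ m ≤ 1 * q ^ m := by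
              gcongr
              exact pow_le_one₀ hq0.le hq1.le
          _ = q ^ m := one_mul _
      have hnn : 0 ≤ c (k + m) * B ^ (k + m) :=
        mul_nonneg (hc _) (pow_nonneg hBpos.le _)
      have : t ^ (k + m) = B ^ (k + m) * q ^ (k + m) := by rw [htq, mul_pow]
      rw [this]
      calc c (k + m) * (B ^ (k + m) * q ^ (k + m))
          = (c (k + m) * B ^ (k + m)) * q ^ (k + m) := by ring
        _ ≤ (c (k + m) * B ^ (k + m)) * q ^ m := by gcongr
        _ = q ^ m * (c (k + m) * B ^ (k + m)) := by ring
    linarith [h1]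
  refine ⟨?_, ?_, ?_, ?_⟩
  · rw [Finset.sum_range_succ (n := n + 1)]
    have := mul_nonneg (hc (n + 1)) (pow_nonneg htpos.le (n + 1))
    linarith
  · exact sum_le_hasSum (Finset.range (n + 2))
      (fun i _ => mul_nonneg (hc i) (pow_nonneg htpos.le i)) hfx
  · exact key (n + 1)
  · have hR := tailL_nonneg (n + 1)
    rw [Finset.sum_range_succ] at hR
    have htn : t ^ n = B ^ n * q ^ n := by rw [htq, mul_pow]
    rw [Finset.sum_range_succ (n := n), Finset.sum_range_succ (n := n), pow_succ q n, htn]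
    have hqn : 0 ≤ q ^ n := pow_nonneg hq0.le n
    nlinarith [mul_le_of_le_one_right (mul_nonneg hR hqn) hq1.le]
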